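/- Let T be a bounded operator on a Hilbert space H, λ a complex number with |λ| < 1, and suppose P is the orthogonal projection onto a nonzero closed subspace M such that P T = λ̄ P (i.e., T has the form [[*, *],[0, λ̄ I]] with respect to H = M^⊥ ⊕ M). Then for every x ∈ H, every y ∈ J(x) satisfies P y = 0; in particular J(x) ≠ H. -/

import Mathlib

open Filter Topology

/-- The J-set of a vector `x` under a bounded operator `T`. -/
def JSet {X : Type*} [NormedAddCommGroup X] [NormedSpace ℂ X]
    (T : X →L[ℂ] X) (x : X) : Set X :=
  {y | ∃ k : ℕ → ℕ, StrictMono k ∧ (∀ n, 0 < k n) ∧ ∃ u : ℕ → X,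
    Tendsto u atTop (𝓝 x) ∧ Tendsto (fun n => (T ^ k n) (u n)) atTop (𝓝 y)}

/-- `T` is a J-class operator if `J(x) = X` for some nonzero `x`. -/
def IsJClass {X : Type*} [NormedAddCommGroup X] [NormedSpace ℂ X]
    (T : X →L[ℂ] X) : Prop :=
  ∃ x : X, x ≠ 0 ∧ JSet T x = Set.univ

/-- If `P` is the orthogonal projection onto a nonzero closed subspace `M` with
`P T = conj lam • P` and `|lam| < 1`, then every `y ∈ J(x)` satisfies `P y = 0`;
in particular `J(x) ≠ H`. -/
theorem jset_proj_eq_zero {H : Type*} [NormedAddCommGroup H]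
    [InnerProductSpace ℂ H] [CompleteSpace H] (T : H →L[ℂ] H)
    (M : Submodule ℂ H) [CompleteSpace M] (hM : M ≠ ⊥) (lam : ℂ) (hlam : ‖lam‖ < 1)
    (P : H →L[ℂ] H)
    (hP : P = M.subtypeL.comp (M.orthogonalProjection))
    (hPT : P.comp T = (starRingEnd ℂ lam) • P) :
    (∀ x : H, ∀ y ∈ JSet T x, P y = 0) ∧ ∀ x : H, JSet T x ≠ Set.univ := by
  have hpow : ∀ m : ℕ, P.comp (T ^ m) = ((starRingEnd ℂ lam) ^ m) • P := by
    intro m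
    induction m with
    | zero => simp; rfl
    | succ n ih =>
      rw [pow_succ]
      have : P.comp (T ^ n * T) = (P.comp (T ^ n)).comp T := rfl
      rw [this, ih]
      ext v
      simp [pow_succ, mul_smul, mul_comm]
      have := congrFun (congrArg (fun (S : H →L[ℂ] H) => (S : H → H)) hPT) v
      simp at this
      rw [this]
      exact smul_comm _ _ _
  have key : ∀ x : H, ∀ y ∈ JSet T x, P y = 0 := by
    intro x y hy
    obtain ⟨k, hk, _, u, hu, hTu⟩ := hy
    have h1 : Tendsto (fun n => P ((T ^ k n) (u n))) atTop (𝓝 (P y)) :=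
      (P.continuous.tendsto y).comp hTu
    have heq : ∀ n, P ((T ^ k n) (u n)) = ((starRingEnd ℂ lam) ^ k n) • P (u n) := by
      intro n
      have := congrFun (congrArg (fun (S : H →L[ℂ] H) => (S : H → H)) (hpow (k n))) (u n)
      simpa using this
    have h2 : Tendsto (fun n => ((starRingEnd ℂ lam) ^ k n) • P (u n)) atTop
        (𝓝 ((0 : ℂ) • P x)) := by
      apply Tendsto.smul
      · have hnorm : ‖starRingEnd ℂ lam‖ < 1 := by simpa using hlam
        exact (tendsto_pow_atTop_nhds_zero_of_norm_lt_one hnorm).comp hk.tendsto_atTop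
      · exact (P.continuous.tendsto x).comp hu
    rw [zero_smul] at h2
    simp only [heq] at h1
    exact tendsto_nhds_unique h1 h2
  refine ⟨key, fun x hx => ?_⟩
  obtain ⟨m, hmM, hm0⟩ := Submodule.exists_mem_ne_zero_of_ne_bot hM
  have hmJ : m ∈ JSet T x := hx ▸ Set.mem_univ m
  have : P m = m := by
    rw [hP]
    simp [← Submodule.starProjection_apply, Submodule.starProjection_eq_self_iff.mpr hmM]
  exact hm0 (by rw [← this, key x m hmJ])
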